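/- Let d, n be positive integers and H ⊆ V(T_n) with 2^(w(H)) > Σ_{i=0}^{d−1} C(n,i). Then there exists a regular embedding of T_d into H (i.e., H contains a replica of T_d). -/

import Mathlib

/-- Vertex set of the full binary tree `T_n` of depth `n-1`:
binary strings of length `< n`; the level of a vertex is its length. -/
def treeVerts (n : ℕ) : Set (List Bool) := {x | x.length < n}

/-- Weight of a set of vertices: `w(H) = Σ_{x ∈ H} 2^(-level x)`. -/
noncomputable def weight (H : Set (List Bool)) : ℝ :=
  ∑' x : H, (2 : ℝ) ^ (-((x : List Bool).length : ℤ))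

/-- `f` is a regular embedding of `T_d`: vertices at equal levels map to equal
levels, and the two children of each vertex map to descendants of distinct
children of the image (descendant = extension of the string). -/
def IsRegEmb (d : ℕ) (f : List Bool → List Bool) : Prop :=
  (∀ x y : List Bool, x.length < d → y.length < d → x.length = y.length →
      (f x).length = (f y).length) ∧
  (∀ x : List Bool, x.length + 1 < d → ∃ c : Bool,
      (f x ++ [c]) <+: f (x ++ [false]) ∧ (f x ++ [!c]) <+: f (x ++ [true]))

/-- `S(H)`: the set of signatures (sets of occupied levels) of all regular
embeddings of some `T_d`, `d ≥ 0`, into `H`. -/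
def sigs (H : Set (List Bool)) : Set (Set ℕ) :=
  {σ | ∃ (d : ℕ) (f : List Bool → List Bool), IsRegEmb d f ∧
      (∀ x : List Bool, x.length < d → f x ∈ H) ∧
      σ = {l : ℕ | ∃ x : List Bool, x.length < d ∧ (f x).length = l}}


namespace Stmt4Aux
open Finset

attribute [local instance] Classical.propDecidable



def shiftF (σ : Finset ℕ) : Finset ℕ := σ.image (· + 1)

def sub (c : Bool) (H : Set (List Bool)) : Set (List Bool) := {x | c :: x ∈ H}

inductive Rep : Set (List Bool) → Finset ℕ → Prop
  | empty (H : Set (List Bool)) : Rep H ∅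
  | shift {H : Set (List Bool)} {σ : Finset ℕ} (c : Bool) :
      Rep (sub c H) σ → Rep H (shiftF σ)
  | root {H : Set (List Bool)} {σ : Finset ℕ} :
      ([] : List Bool) ∈ H → Rep (sub false H) σ → Rep (sub true H) σ →
      Rep H (insert 0 (shiftF σ))

noncomputable def lev (σ : Finset ℕ) (k : ℕ) : ℕ := (σ.sort (· ≤ ·)).getD k 0

lemma add_one_inj : Function.Injective (fun a : ℕ => a + 1) := fun a b h => by simpa using h

@[simp] lemma shiftF_card (σ : Finset ℕ) : (shiftF σ).card = σ.card :=
  card_image_of_injective _ add_one_inj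

lemma zero_not_mem_shiftF (σ : Finset ℕ) : 0 ∉ shiftF σ := by
  simp [shiftF]

lemma sort_shiftF (σ : Finset ℕ) :
    (shiftF σ).sort (· ≤ ·) = (σ.sort (· ≤ ·)).map (· + 1) := by
  apply List.Perm.eq_of_pairwise' (Finset.pairwise_sort _ _)
  · exact List.Pairwise.map _ (fun a b h => by simpa using h) (Finset.pairwise_sort _ _)
  · rw [← Multiset.coe_eq_coe]
    have h1 : ((shiftF σ).sort (· ≤ ·) : Multiset ℕ) = (shiftF σ).1 := Finset.sort_eq _ _
    have h2 : ((σ.sort (· ≤ ·)) : Multiset ℕ) = σ.1 := Finset.sort_eq _ _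
    have h3 : (shiftF σ).1 = σ.1.map (· + 1) := by
      rw [shiftF, Finset.image_val]
      exact Multiset.dedup_eq_self.mpr (σ.nodup.map add_one_inj)
    rw [h1, h3, ← h2, Multiset.map_coe]

lemma lev_shiftF {σ : Finset ℕ} {k : ℕ} (hk : k < σ.card) :
    lev (shiftF σ) k = lev σ k + 1 := by
  have hk1 : k < (σ.sort (· ≤ ·)).length := by rwa [Finset.length_sort]
  have hk2 : k < ((σ.sort (· ≤ ·)).map (· + 1)).length := by simpa using hk1
  simp only [lev]; rw [sort_shiftF, List.getD_eq_getElem _ _ hk2, List.getD_eq_getElem _ _ hk1,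
    List.getElem_map]

lemma sort_insert_zero (σ : Finset ℕ) :
    (insert 0 (shiftF σ)).sort (· ≤ ·) = 0 :: (shiftF σ).sort (· ≤ ·) :=
  Finset.sort_insert _ (fun b _ => Nat.zero_le b) (zero_not_mem_shiftF σ)

@[simp] lemma card_insert_zero (σ : Finset ℕ) :
    (insert 0 (shiftF σ)).card = σ.card + 1 := by
  rw [Finset.card_insert_of_notMem (zero_not_mem_shiftF σ), shiftF_card]

lemma lev_root_zero (σ : Finset ℕ) : lev (insert 0 (shiftF σ)) 0 = 0 := by
  simp only [lev]; rw [sort_insert_zero, List.getD_cons_zero]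

lemma lev_root_succ {σ : Finset ℕ} {k : ℕ} (hk : k < σ.card) :
    lev (insert 0 (shiftF σ)) (k + 1) = lev σ k + 1 := by
  simp only [lev]; rw [sort_insert_zero, List.getD_cons_succ, ← lev, ← lev, lev_shiftF hk]

lemma prefix_cons {c : Bool} {l1 l2 : List Bool} (h : l1 <+: l2) : (c :: l1) <+: (c :: l2) := by
  obtain ⟨t, ht⟩ := h; exact ⟨t, by simp [← ht]⟩

lemma rep_emb {H : Set (List Bool)} {σ : Finset ℕ} (h : Rep H σ) :
    ∃ f : List Bool → List Bool,
      (∀ x : List Bool, x.length < σ.card →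
        f x ∈ H ∧ (f x).length = lev σ x.length) ∧
      (∀ x : List Bool, x.length + 1 < σ.card → ∃ c : Bool,
        (f x ++ [c]) <+: f (x ++ [false]) ∧ (f x ++ [!c]) <+: f (x ++ [true])) := by
  induction h with
  | empty H =>
      exact ⟨id, fun x hx => by simp at hx, fun x hx => by simp at hx⟩
  | @shift H' σ' c _ ih =>
      obtain ⟨f, hf1, hf2⟩ := ih
      refine ⟨fun x => c :: f x, fun x hx => ?_, fun x hx => ?_⟩
      · rw [shiftF_card] at hx
        exact ⟨(hf1 x hx).1, by simp [lev_shiftF hx, (hf1 x hx).2]⟩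
      · rw [shiftF_card] at hx
        obtain ⟨b, h1, h2⟩ := hf2 x hx
        exact ⟨b, prefix_cons h1, prefix_cons h2⟩
  | @root H' σ' hmem _ _ ih0 ih1 =>
      obtain ⟨f0, hf01, hf02⟩ := ih0
      obtain ⟨f1, hf11, hf12⟩ := ih1
      refine ⟨fun x => match x with
        | [] => []
        | (false :: y) => false :: f0 y
        | (true :: y) => true :: f1 y, fun x hx => ?_, fun x hx => ?_⟩
      · rw [card_insert_zero] at hx
        match x with
        | [] => exact ⟨hmem, by simp [lev_root_zero]⟩
        | (false :: y) =>
            have hy : y.length < σ'.card := by simpa using hx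
            exact ⟨(hf01 y hy).1, by simp [lev_root_succ hy, (hf01 y hy).2]⟩
        | (true :: y) =>
            have hy : y.length < σ'.card := by simpa using hx
            exact ⟨(hf11 y hy).1, by simp [lev_root_succ hy, (hf11 y hy).2]⟩
      · rw [card_insert_zero] at hx
        match x with
        | [] => exact ⟨false, ⟨f0 [], rfl⟩, ⟨f1 [], rfl⟩⟩
        | (false :: y) =>
            have hy : y.length + 1 < σ'.card := by simpa using hx
            obtain ⟨b, h1, h2⟩ := hf02 y hy
            exact ⟨b, prefix_cons h1, prefix_cons h2⟩
        | (true :: y) =>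
            have hy : y.length + 1 < σ'.card := by simpa using hx
            obtain ⟨b, h1, h2⟩ := hf12 y hy
            exact ⟨b, prefix_cons h1, prefix_cons h2⟩

lemma treeVerts_finite (n : ℕ) : (treeVerts n).Finite := List.finite_length_lt Bool n

lemma sub_subset {n : ℕ} {H : Set (List Bool)} (hH : H ⊆ treeVerts (n + 1)) (c : Bool) :
    sub c H ⊆ treeVerts n := by
  intro x hx
  have := hH hx
  simpa [treeVerts] using this

lemma weight_eq_sum {H : Set (List Bool)} (hfin : H.Finite) :
    weight H = ∑ x ∈ hfin.toFinset, (2 : ℝ) ^ (-(x.length : ℤ)) := by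
  rw [weight]
  conv_lhs => rw [← hfin.coe_toFinset]
  exact Finset.tsum_subtype hfin.toFinset (fun x => (2 : ℝ) ^ (-(x.length : ℤ)))

lemma weight_nonneg (H : Set (List Bool)) : 0 ≤ weight H :=
  tsum_nonneg fun x => by positivity

lemma weight_split {n : ℕ} {H : Set (List Bool)} (hH : H ⊆ treeVerts (n + 1)) :
    weight H = (if ([] : List Bool) ∈ H then (1 : ℝ) else 0)
      + (weight (sub false H) + weight (sub true H)) / 2 := by
  have hfin : H.Finite := (treeVerts_finite (n + 1)).subset hH
  have hfinc : ∀ c : Bool, (sub c H).Finite :=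
    fun c => (treeVerts_finite n).subset (sub_subset hH c)
  rw [weight_eq_sum hfin, weight_eq_sum (hfinc false), weight_eq_sum (hfinc true)]
  have hcons : ∀ c : Bool, ∀ y : List Bool,
      (2 : ℝ) ^ (-((c :: y).length : ℤ)) = (2 : ℝ) ^ (-(y.length : ℤ)) / 2 := by
    intro c y
    simp only [List.length_cons]
    rw [div_eq_mul_inv, ← zpow_neg_one, ← zpow_add₀ (two_ne_zero)]
    congr 1
    push_cast
    ring
  have hsub : ∀ c : Bool,
      ∑ x ∈ hfin.toFinset.filter (fun x => x.head? = some c), (2 : ℝ) ^ (-(x.length : ℤ))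
        = (∑ y ∈ (hfinc c).toFinset, (2 : ℝ) ^ (-(y.length : ℤ))) / 2 := by
    intro c
    rw [Finset.sum_div]
    apply Finset.sum_nbij' (i := List.tail) (j := (c :: ·))
    · intro a ha
      rw [Finset.mem_filter, Set.Finite.mem_toFinset] at ha
      obtain ⟨ha1, ha2⟩ := ha
      match a, ha2 with
      | (b :: y), h =>
        have hb : b = c := by simpa using h
        subst hb
        simpa [sub] using ha1
    · intro a ha
      rw [Set.Finite.mem_toFinset] at ha
      rw [Finset.mem_filter, Set.Finite.mem_toFinset]
      exact ⟨ha, rfl⟩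
    · intro a ha
      rw [Finset.mem_filter] at ha
      obtain ⟨ha1, ha2⟩ := ha
      match a, ha2 with
      | (b :: y), h =>
        have hb : b = c := by simpa using h
        subst hb
        rfl
    · intro a _; rfl
    · intro a ha
      rw [Finset.mem_filter] at ha
      obtain ⟨ha1, ha2⟩ := ha
      match a, ha2 with
      | (b :: y), h =>
        have hb : b = c := by simpa using h
        subst hb
        simpa using hcons b y
  have key : hfin.toFinset = (hfin.toFinset.filter (fun x => x = []))
      ∪ ((hfin.toFinset.filter (fun x => x.head? = some false))
      ∪ (hfin.toFinset.filter (fun x => x.head? = some true))) := by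
    ext x
    simp only [Finset.mem_union, Finset.mem_filter]
    constructor
    · intro hx
      match x with
      | [] => exact Or.inl ⟨hx, rfl⟩
      | (false :: y) => exact Or.inr (Or.inl ⟨hx, rfl⟩)
      | (true :: y) => exact Or.inr (Or.inr ⟨hx, rfl⟩)
    · rintro (⟨h, -⟩ | ⟨h, -⟩ | ⟨h, -⟩) <;> exact h
  have d1 : Disjoint (hfin.toFinset.filter (fun x => x.head? = some false))
      (hfin.toFinset.filter (fun x => x.head? = some true)) := by
    rw [Finset.disjoint_left]
    rintro a ha hb
    rw [Finset.mem_filter] at ha hb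
    rw [ha.2] at hb
    exact Bool.noConfusion (Option.some.inj hb.2)
  have d2 : Disjoint (hfin.toFinset.filter (fun x => x = []))
      ((hfin.toFinset.filter (fun x => x.head? = some false))
      ∪ (hfin.toFinset.filter (fun x => x.head? = some true))) := by
    rw [Finset.disjoint_left]
    rintro a ha hb
    rw [Finset.mem_filter] at ha
    rw [Finset.mem_union, Finset.mem_filter, Finset.mem_filter] at hb
    rcases hb with ⟨-, hb⟩ | ⟨-, hb⟩ <;> rw [ha.2] at hb <;> exact absurd hb (by simp)
  conv_lhs => rw [key]
  rw [Finset.sum_union d2, Finset.sum_union d1, hsub false, hsub true]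
  have hfe : ∑ x ∈ hfin.toFinset.filter (fun x => x = []), (2 : ℝ) ^ (-(x.length : ℤ))
      = if ([] : List Bool) ∈ H then (1 : ℝ) else 0 := by
    rw [show hfin.toFinset.filter (fun x => x = []) = ite ([] ∈ hfin.toFinset) {[]} ∅ by
      convert Finset.filter_eq' hfin.toFinset ([] : List Bool)]
    by_cases hmem : ([] : List Bool) ∈ H
    · rw [if_pos (hfin.mem_toFinset.mpr hmem), if_pos hmem]
      simp
    · rw [if_neg (fun hc => hmem (hfin.mem_toFinset.mp hc)), if_neg hmem]
      simp
  rw [hfe]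
  ring
noncomputable def SS (n : ℕ) (H : Set (List Bool)) : Finset (Finset ℕ) :=
  (Finset.range n).powerset.filter (fun σ => Rep H σ)

lemma mem_SS {n : ℕ} {H : Set (List Bool)} {σ : Finset ℕ} :
    σ ∈ SS n H ↔ σ ⊆ Finset.range n ∧ Rep H σ := by
  simp [SS, Finset.mem_filter, Finset.mem_powerset]

lemma insert_zero_shiftF_inj : Function.Injective (fun σ => insert 0 (shiftF σ)) := by
  intro σ τ h
  apply Finset.image_injective add_one_inj
  have := congrArg (Finset.erase · 0) h
  simpa [Finset.erase_insert, zero_not_mem_shiftF, shiftF] using this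

lemma rpow_sq (a : ℝ) : (2 : ℝ) ^ a = ((2 : ℝ) ^ (a / 2)) ^ 2 := by
  rw [← Real.rpow_natCast ((2:ℝ) ^ (a/2)) 2, ← Real.rpow_mul (by norm_num : (0:ℝ) ≤ 2)]
  norm_num

lemma amgm (a b : ℝ) : 2 * (2 : ℝ) ^ ((a + b) / 2) ≤ (2 : ℝ) ^ a + (2 : ℝ) ^ b := by
  have hab : (2 : ℝ) ^ ((a + b) / 2) = (2 : ℝ) ^ (a / 2) * (2 : ℝ) ^ (b / 2) := by
    rw [← Real.rpow_add two_pos]; ring_nf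
  rw [rpow_sq a, rpow_sq b, hab]
  nlinarith [sq_nonneg ((2:ℝ) ^ (a/2) - (2:ℝ) ^ (b/2))]

lemma key : ∀ (n : ℕ) (H : Set (List Bool)), H ⊆ treeVerts n →
    (2 : ℝ) ^ weight H ≤ ((SS n H).card : ℝ) := by
  intro n
  induction n with
  | zero =>
      intro H hH
      have hempty : H = ∅ := by
        apply Set.eq_empty_of_subset_empty
        intro x hx
        exact absurd (hH hx) (by simp [treeVerts])
      have hw : weight H = 0 := by rw [hempty, weight]; exact tsum_empty
      rw [hw, Real.rpow_zero]
      have hmem : (∅ : Finset ℕ) ∈ SS 0 H := mem_SS.mpr ⟨Finset.empty_subset _, Rep.empty H⟩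
      exact_mod_cast Finset.card_pos.mpr ⟨∅, hmem⟩
  | succ n ih =>
      intro H hH
      have h0 := ih (sub false H) (sub_subset hH false)
      have h1 := ih (sub true H) (sub_subset hH true)
      have hshift_mem : ∀ (c : Bool) (σ : Finset ℕ), σ ∈ SS n (sub c H) →
          shiftF σ ∈ SS (n + 1) H := by
        intro c σ hσ
        rw [mem_SS] at hσ ⊢
        refine ⟨?_, Rep.shift c hσ.2⟩
        intro t ht
        simp only [shiftF, Finset.mem_image] at ht
        obtain ⟨a, ha, rfl⟩ := ht
        have := hσ.1 ha
        rw [Finset.mem_range] at this ⊢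
        omega
      set A := (SS n (sub false H)).image shiftF with hA
      set B := (SS n (sub true H)).image shiftF with hB
      have hshift_inj : Function.Injective shiftF := Finset.image_injective add_one_inj
      have hAsub : A ⊆ SS (n + 1) H := by
        intro τ hτ
        rw [hA, Finset.mem_image] at hτ
        obtain ⟨σ, hσ, rfl⟩ := hτ
        exact hshift_mem false σ hσ
      have hBsub : B ⊆ SS (n + 1) H := by
        intro τ hτ
        rw [hB, Finset.mem_image] at hτ
        obtain ⟨σ, hσ, rfl⟩ := hτ
        exact hshift_mem true σ hσ
      have cardA : A.card = (SS n (sub false H)).card :=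
        Finset.card_image_of_injective _ hshift_inj
      have cardB : B.card = (SS n (sub true H)).card :=
        Finset.card_image_of_injective _ hshift_inj
      by_cases hroot : ([] : List Bool) ∈ H
      · set C := ((SS n (sub false H)) ∩ (SS n (sub true H))).image
          (fun σ => insert 0 (shiftF σ)) with hC
        have hCsub : C ⊆ SS (n + 1) H := by
          intro τ hτ
          rw [hC, Finset.mem_image] at hτ
          obtain ⟨σ, hσ, rfl⟩ := hτ
          rw [Finset.mem_inter] at hσ
          rw [mem_SS]
          constructor
          · intro t ht
            rcases Finset.mem_insert.mp ht with rfl | ht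
            · simp
            · have := (mem_SS.mp ((hshift_mem false σ hσ.1))).1 ht
              exact this
          · exact Rep.root hroot (mem_SS.mp hσ.1).2 (mem_SS.mp hσ.2).2
        have hdisj : Disjoint (A ∪ B) C := by
          rw [Finset.disjoint_left]
          intro τ hτ hτC
          rw [hC, Finset.mem_image] at hτC
          obtain ⟨σ, -, rfl⟩ := hτC
          have h0mem : (0 : ℕ) ∈ insert 0 (shiftF σ) := Finset.mem_insert_self _ _
          rcases Finset.mem_union.mp hτ with hτ' | hτ' <;>
            · rw [Finset.mem_image] at hτ'
              obtain ⟨ρ, -, hρ⟩ := hτ'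
              rw [← hρ] at h0mem
              exact zero_not_mem_shiftF ρ h0mem
        have hcard : ((A ∪ B) ∪ C).card ≤ (SS (n + 1) H).card :=
          Finset.card_le_card (Finset.union_subset (Finset.union_subset hAsub hBsub) hCsub)
        rw [Finset.card_union_of_disjoint hdisj] at hcard
        have hABi : A ∩ B = ((SS n (sub false H)) ∩ (SS n (sub true H))).image shiftF :=
          (Finset.image_inter _ _ hshift_inj).symm
        have hCcard : C.card = (A ∩ B).card := by
          rw [hC, hABi, Finset.card_image_of_injective _ insert_zero_shiftF_inj,
            Finset.card_image_of_injective _ hshift_inj]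
        have hsum : A.card + B.card ≤ (SS (n + 1) H).card := by
          have := Finset.card_union_add_card_inter A B
          omega
        have hw : weight H = 1 + (weight (sub false H) + weight (sub true H)) / 2 := by
          rw [weight_split hH, if_pos hroot]
        have hnum : (2 : ℝ) ^ weight H
            ≤ (2 : ℝ) ^ weight (sub false H) + (2 : ℝ) ^ weight (sub true H) := by
          rw [hw, Real.rpow_add two_pos, Real.rpow_one]
          exact amgm _ _
        calc (2 : ℝ) ^ weight H
            ≤ (2 : ℝ) ^ weight (sub false H) + (2 : ℝ) ^ weight (sub true H) := hnum
          _ ≤ ((SS n (sub false H)).card : ℝ) + ((SS n (sub true H)).card : ℝ) :=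
              add_le_add h0 h1
          _ ≤ ((SS (n + 1) H).card : ℝ) := by
              rw [← cardA, ← cardB]
              exact_mod_cast hsum
      · have hw : weight H = (weight (sub false H) + weight (sub true H)) / 2 := by
          rw [weight_split hH, if_neg hroot, zero_add]
        rcases le_total (weight (sub false H)) (weight (sub true H)) with hle | hle
        · calc (2 : ℝ) ^ weight H ≤ (2 : ℝ) ^ weight (sub true H) := by
                rw [hw]
                exact (Real.rpow_le_rpow_left_iff one_lt_two).mpr (by linarith)
            _ ≤ ((SS n (sub true H)).card : ℝ) := h1
            _ ≤ ((SS (n + 1) H).card : ℝ) := by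
                rw [← cardB]
                exact_mod_cast Finset.card_le_card hBsub
        · calc (2 : ℝ) ^ weight H ≤ (2 : ℝ) ^ weight (sub false H) := by
                rw [hw]
                exact (Real.rpow_le_rpow_left_iff one_lt_two).mpr (by linarith)
            _ ≤ ((SS n (sub false H)).card : ℝ) := h0
            _ ≤ ((SS (n + 1) H).card : ℝ) := by
                rw [← cardA]
                exact_mod_cast Finset.card_le_card hAsub

lemma card_small (n d : ℕ) :
    (((Finset.range n).powerset).filter (fun σ => σ.card < d)).card
      = ∑ i ∈ Finset.range d, n.choose i := by
  have heq : ((Finset.range n).powerset).filter (fun σ => σ.card < d)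
      = (Finset.range d).biUnion (fun i => (Finset.range n).powersetCard i) := by
    ext σ
    simp only [Finset.mem_filter, Finset.mem_powerset, Finset.mem_biUnion, Finset.mem_range,
      Finset.mem_powersetCard]
    constructor
    · rintro ⟨h1, h2⟩; exact ⟨σ.card, h2, h1, rfl⟩
    · rintro ⟨i, hi, hsub, hcard⟩; exact ⟨hsub, hcard ▸ hi⟩
  rw [heq, Finset.card_biUnion]
  · exact Finset.sum_congr rfl fun i _ => by rw [Finset.card_powersetCard, Finset.card_range]
  · intro i _ j _ hij
    rw [Function.onFun, Finset.disjoint_left]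
    intro σ h1 h2
    rw [Finset.mem_powersetCard] at h1 h2
    exact hij (h1.2.symm.trans h2.2)

end Stmt4Aux

theorem stmt4 (d n : ℕ) (hd : 0 < d) (hn : 0 < n)
    (H : Set (List Bool)) (hH : H ⊆ treeVerts n)
    (h : ∑ i ∈ Finset.range d, (n.choose i : ℝ) < (2 : ℝ) ^ weight H) :
    ∃ f : List Bool → List Bool, IsRegEmb d f ∧
      ∀ x : List Bool, x.length < d → f x ∈ H := by
  classical
  have hkey := Stmt4Aux.key n H hH
  have hlt : (∑ i ∈ Finset.range d, (n.choose i : ℝ)) < ((Stmt4Aux.SS n H).card : ℝ) :=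
    lt_of_lt_of_le h hkey
  have hexists : ∃ σ ∈ Stmt4Aux.SS n H, d ≤ σ.card := by
    by_contra hc
    push_neg at hc
    have hsub : Stmt4Aux.SS n H ⊆ ((Finset.range n).powerset).filter (fun σ => σ.card < d) := by
      intro σ hσ
      rw [Finset.mem_filter, Finset.mem_powerset]
      exact ⟨(Stmt4Aux.mem_SS.mp hσ).1, hc σ hσ⟩
    have hle := Finset.card_le_card hsub
    rw [Stmt4Aux.card_small n d] at hle
    have hle2 : ((Stmt4Aux.SS n H).card : ℝ) ≤ ∑ i ∈ Finset.range d, (n.choose i : ℝ) := by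
      push_cast
      exact_mod_cast hle
    linarith
  obtain ⟨σ, hσ, hdle⟩ := hexists
  obtain ⟨f, hf1, hf2⟩ := Stmt4Aux.rep_emb (Stmt4Aux.mem_SS.mp hσ).2
  refine ⟨f, ⟨?_, ?_⟩, ?_⟩
  · intro x y hx hy hxy
    rw [(hf1 x (lt_of_lt_of_le hx hdle)).2, (hf1 y (lt_of_lt_of_le hy hdle)).2, hxy]
  · intro x hx
    exact hf2 x (lt_of_lt_of_le hx hdle)
  · intro x hx
    exact (hf1 x (lt_of_lt_of_le hx hdle)).1
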